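/- Let a ∈ C¹([0,ℓ]) with a > 0, b ∈ C([0,ℓ]) with b ≥ 0, and p ∈ C([0,T]) with p > 0. For 2 ≤ n ≤ N+1 set K^n(y) = p(t_n) a(y) and c^n(y) = p(t_n) b(y) + T̂_{n,n−1}. Suppose broken polynomials u_h^1, …, u_h^{N+1} of degree k satisfy u_h^1 = 0 and, for each n with 2 ≤ n ≤ N+1, the homogeneous fully discrete L1-NIPG scheme B^n(u_h^n, v) = Σ_{m=1}^M ∫_{K_m} (T̂_{n,1} u_h^1 + Σ_{j=2}^{n−1} (T̂_{n,j} − T̂_{n,j−1}) u_h^j) v_m dy for all broken polynomials v of degree k, where B^n is the NIPG bilinear form with coefficients K^n, c^n. Then u_h^n = 0 for every n; in particular the fully discrete L1-NIPG scheme has at most one solution. -/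

import Mathlib

/-- Graded temporal mesh `t_n = T ((n-1)/N)^r`. -/
noncomputable def tmesh (T r : ℝ) (N n : ℕ) : ℝ := T * (((n : ℝ) - 1) / (N : ℝ)) ^ r

/-- Step sizes `τ_n = t_{n+1} - t_n`. -/
noncomputable def tau (T r : ℝ) (N n : ℕ) : ℝ := tmesh T r N (n + 1) - tmesh T r N n

/-- L1 coefficients `T̂_{n,j}` (with the convention `T̂_{n,0} = 0`). -/
noncomputable def That (α T r : ℝ) (N n j : ℕ) : ℝ :=
  if j = 0 then 0 else
    ((tmesh T r N n - tmesh T r N j) ^ (1 - α) -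
        (tmesh T r N n - tmesh T r N (j + 1)) ^ (1 - α)) /
      (tau T r N j * Real.Gamma (2 - α))

/-- Node `y_m = (m-1) h` with `h = ℓ/M`. -/
noncomputable def node (ℓ : ℝ) (M m : ℕ) : ℝ := ((m : ℝ) - 1) * (ℓ / (M : ℝ))

/-- The jump `[v(y_m)]` of a broken polynomial `v = (v_1,…,v_M)` at the node `y_m`. -/
noncomputable def jump (ℓ : ℝ) (M : ℕ) (v : ℕ → Polynomial ℝ) (m : ℕ) : ℝ :=
  if m = 1 then (v 1).eval (node ℓ M 1)
  else if m = M + 1 then -((v M).eval (node ℓ M (M + 1)))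
  else (v m).eval (node ℓ M m) - (v (m - 1)).eval (node ℓ M m)

/-- The average `{v(y_m)}` of a broken polynomial `v = (v_1,…,v_M)` at the node `y_m`. -/
noncomputable def avg (ℓ : ℝ) (M : ℕ) (v : ℕ → Polynomial ℝ) (m : ℕ) : ℝ :=
  if m = 1 then (v 1).eval (node ℓ M 1)
  else if m = M + 1 then (v M).eval (node ℓ M (M + 1))
  else ((v m).eval (node ℓ M m) + (v (m - 1)).eval (node ℓ M m)) / 2

/-- The NIPG bilinear form with coefficients `K`, `c` and penalties `σ_m`:
`B(u,v) = Σ_m ∫_{K_m}(K u' v' + c u v) + Σ_m {K(y_m) u'(y_m)}[v(y_m)]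
  - Σ_m {K(y_m) v'(y_m)}[u(y_m)] + Σ_m σ_m [u(y_m)][v(y_m)]`. -/
noncomputable def nipg (ℓ : ℝ) (M : ℕ) (K c : ℝ → ℝ) (σ : ℕ → ℝ)
    (u v : ℕ → Polynomial ℝ) : ℝ :=
  (∑ m ∈ Finset.Icc 1 M, ∫ y in node ℓ M m..node ℓ M (m + 1),
      (K y * (Polynomial.derivative (u m)).eval y * (Polynomial.derivative (v m)).eval y +
        c y * (u m).eval y * (v m).eval y))
  + (∑ m ∈ Finset.Icc 1 (M + 1),
      K (node ℓ M m) * avg ℓ M (fun i => Polynomial.derivative (u i)) m * jump ℓ M v m)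
  - (∑ m ∈ Finset.Icc 1 (M + 1),
      K (node ℓ M m) * avg ℓ M (fun i => Polynomial.derivative (v i)) m * jump ℓ M u m)
  + (∑ m ∈ Finset.Icc 1 (M + 1), σ m * jump ℓ M u m * jump ℓ M v m)

/-- The broken `L²(0,ℓ)` norm of a broken polynomial. -/
noncomputable def brokenL2 (ℓ : ℝ) (M : ℕ) (v : ℕ → Polynomial ℝ) : ℝ :=
  Real.sqrt (∑ m ∈ Finset.Icc 1 M,
    ∫ y in node ℓ M m..node ℓ M (m + 1), ((v m).eval y) ^ 2)

/-- The `L²(0,ℓ)` norm of a function. -/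
noncomputable def funL2 (ℓ : ℝ) (f : ℝ → ℝ) : ℝ :=
  Real.sqrt (∫ y in (0 : ℝ)..ℓ, (f y) ^ 2)

open MeasureTheory

lemma tmesh_nonneg' {T r : ℝ} (hT : 0 < T) {N n : ℕ} (hn : 1 ≤ n) :
    0 ≤ tmesh T r N n := by
  unfold tmesh
  apply mul_nonneg hT.le
  apply Real.rpow_nonneg
  apply div_nonneg _ (Nat.cast_nonneg N)
  have : (1:ℝ) ≤ n := by exact_mod_cast hn
  linarith

lemma tmesh_le' {T r : ℝ} (hT : 0 < T) (hr : 1 ≤ r) {N n : ℕ} (hn1 : 1 ≤ n)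
    (hn : n ≤ N + 1) : tmesh T r N n ≤ T := by
  unfold tmesh
  have h1 : (1:ℝ) ≤ n := by exact_mod_cast hn1
  have h2 : (n:ℝ) ≤ (N:ℝ) + 1 := by exact_mod_cast hn
  have hb0 : (0:ℝ) ≤ ((n:ℝ) - 1) / N := div_nonneg (by linarith) (Nat.cast_nonneg N)
  have hb1 : ((n:ℝ) - 1) / N ≤ 1 := by
    rcases Nat.eq_zero_or_pos N with h | h
    · subst h; simp
    · have hN' : (0:ℝ) < N := by exact_mod_cast h
      rw [div_le_one hN']; linarith
  calc T * (((n:ℝ)-1)/N) ^ r ≤ T * 1 := by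
        exact mul_le_mul_of_nonneg_left (Real.rpow_le_one hb0 hb1 (by linarith)) hT.le
    _ = T := mul_one T

lemma tau_pos' {T r : ℝ} (hT : 0 < T) (hr : 1 ≤ r) {N n : ℕ} (hN : 0 < N)
    (hn : 1 ≤ n) : 0 < tau T r N n := by
  unfold tau tmesh
  have hN' : (0:ℝ) < N := by exact_mod_cast hN
  have h1 : (1:ℝ) ≤ n := by exact_mod_cast hn
  have hb0 : (0:ℝ) ≤ ((n:ℝ) - 1) / N := div_nonneg (by linarith) hN'.le
  have hlt : ((n:ℝ) - 1) / N < (((n+1:ℕ):ℝ) - 1) / N := by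
    push_cast
    apply div_lt_div_of_pos_right ?_ hN'
    linarith
  rw [sub_pos]
  exact mul_lt_mul_of_pos_left (Real.rpow_lt_rpow hb0 hlt (by linarith)) hT

lemma poly_zero_of_sq_integral (u : Polynomial ℝ) {c d : ℝ} (hcd : c < d)
    (h : (∫ y in c..d, (u.eval y)^2) = 0) : u = 0 := by
  by_contra hu
  have hroots : {x | u.IsRoot x}.Finite := Polynomial.finite_setOf_isRoot hu
  have hcont : Continuous fun y => (u.eval y)^2 := (Polynomial.continuous u).pow 2
  rw [intervalIntegral.integral_of_le hcd.le] at h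
  have hint : IntegrableOn (fun y => (u.eval y)^2) (Set.Ioc c d) :=
    hcont.integrableOn_Ioc
  have hae := (MeasureTheory.integral_eq_zero_iff_of_nonneg
    (fun y => sq_nonneg _) hint).mp h
  have hae' : ∀ᵐ y ∂(volume.restrict (Set.Ioc c d)), (u.eval y)^2 = 0 := by
    filter_upwards [hae] with y hy using hy
  have hae2 : ∀ᵐ y ∂(volume : Measure ℝ), y ∈ Set.Ioc c d → (u.eval y)^2 = 0 :=
    (ae_restrict_iff' measurableSet_Ioc).mp hae'
  rw [MeasureTheory.ae_iff] at hae2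
  have hsub : Set.Ioc c d ⊆
      {y | ¬(y ∈ Set.Ioc c d → (u.eval y)^2 = 0)} ∪ {x | u.IsRoot x} := by
    intro y hy
    by_cases hf : (u.eval y)^2 = 0
    · right; exact (pow_eq_zero_iff two_ne_zero).mp hf
    · left; exact fun himp => hf (himp hy)
  have h0 : volume (Set.Ioc c d) = 0 :=
    measure_mono_null hsub (measure_union_null hae2 (hroots.measure_zero volume))
  rw [Real.volume_Ioc] at h0
  rw [ENNReal.ofReal_eq_zero] at h0
  linarith


lemma That_pos' {α T r : ℝ} (hα0 : 0 < α) (hα1 : α < 1) (hT : 0 < T) (hr : 1 ≤ r)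
    {N n : ℕ} (hN : 0 < N) (hn : 2 ≤ n) : 0 < That α T r N n (n - 1) := by
  have hj : n - 1 ≠ 0 := by omega
  have hsucc : n - 1 + 1 = n := by omega
  have htau : 0 < tau T r N (n-1) := tau_pos' hT hr hN (by omega)
  have heq : tmesh T r N n - tmesh T r N (n-1) = tau T r N (n-1) := by
    unfold tau; rw [hsucc]
  unfold That
  rw [if_neg hj, hsucc, heq, sub_self,
    Real.zero_rpow (by intro h; nlinarith : (1:ℝ) - α ≠ 0), sub_zero]
  exact div_pos (Real.rpow_pos_of_pos htau _)
    (mul_pos htau (Real.Gamma_pos_of_pos (by linarith)))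

lemma node_lt' {ℓ : ℝ} (hℓ : 0 < ℓ) {M : ℕ} (hM : 0 < M) (m : ℕ) :
    node ℓ M m < node ℓ M (m+1) := by
  have hM' : (0:ℝ) < M := by exact_mod_cast hM
  have hh : 0 < ℓ / M := div_pos hℓ hM'
  unfold node
  push_cast
  nlinarith [hh]

lemma node_nonneg' {ℓ : ℝ} (hℓ : 0 < ℓ) {M m : ℕ} (hM : 0 < M) (hm : 1 ≤ m) :
    0 ≤ node ℓ M m := by
  have hM' : (0:ℝ) < M := by exact_mod_cast hM
  have hm' : (1:ℝ) ≤ m := by exact_mod_cast hm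
  unfold node
  have hh : 0 ≤ ℓ / M := (div_pos hℓ hM').le
  nlinarith

lemma node_le' {ℓ : ℝ} (hℓ : 0 < ℓ) {M m : ℕ} (hM : 0 < M) (hm : m ≤ M + 1) :
    node ℓ M m ≤ ℓ := by
  have hM' : (0:ℝ) < M := by exact_mod_cast hM
  have hm' : (m:ℝ) ≤ (M:ℝ) + 1 := by exact_mod_cast hm
  unfold node
  have hc : (M:ℝ) * (ℓ / M) = ℓ := by field_simp
  have : ((m:ℝ) - 1) * (ℓ / M) ≤ (M:ℝ) * (ℓ / M) :=
    mul_le_mul_of_nonneg_right (by linarith) (div_pos hℓ hM').le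
  linarith
/-- uniqueness for the fully discrete L1-NIPG scheme: if `u_h^1 = 0`
and `u_h^2,…,u_h^{N+1}` solve the homogeneous scheme, then `u_h^n = 0` for every `n`;
in particular the scheme has at most one solution. -/
theorem l1nipg_uniqueness (α T r : ℝ) (hα : α ∈ Set.Ioo (0 : ℝ) 1) (hT : 0 < T)
    (hr : 1 ≤ r) (N : ℕ) (hN : 0 < N) (ℓ : ℝ) (hℓ : 0 < ℓ) (M k : ℕ) (hM : 1 ≤ M)
    (hk : 1 ≤ k) (a a' b p : ℝ → ℝ)
    (ha : ∀ y ∈ Set.Icc 0 ℓ, HasDerivAt a (a' y) y)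
    (ha' : ContinuousOn a' (Set.Icc 0 ℓ))
    (hapos : ∀ y ∈ Set.Icc 0 ℓ, 0 < a y)
    (hb : ContinuousOn b (Set.Icc 0 ℓ)) (hbnn : ∀ y ∈ Set.Icc 0 ℓ, 0 ≤ b y)
    (hp : ContinuousOn p (Set.Icc 0 T)) (hppos : ∀ t ∈ Set.Icc 0 T, 0 < p t)
    (σ : ℕ → ℝ) (hσ : ∀ m, 0 ≤ σ m)
    (uh : ℕ → ℕ → Polynomial ℝ)
    (hdeg : ∀ n m, (uh n m).degree ≤ k)
    (h1 : ∀ m ∈ Finset.Icc 1 M, uh 1 m = 0)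
    (hscheme : ∀ n, 2 ≤ n → n ≤ N + 1 →
      ∀ v : ℕ → Polynomial ℝ, (∀ m, (v m).degree ≤ k) →
        nipg ℓ M (fun y => p (tmesh T r N n) * a y)
            (fun y => p (tmesh T r N n) * b y + That α T r N n (n - 1)) σ (uh n) v =
          ∑ m ∈ Finset.Icc 1 M, ∫ y in node ℓ M m..node ℓ M (m + 1),
            (That α T r N n 1 * (uh 1 m).eval y +
                ∑ j ∈ Finset.Icc 2 (n - 1),
                  (That α T r N n j - That α T r N n (j - 1)) * (uh j m).eval y) *
              (v m).eval y) :
    ∀ n, 1 ≤ n → n ≤ N + 1 → ∀ m ∈ Finset.Icc 1 M, uh n m = 0 := by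
  obtain ⟨hα0, hα1⟩ := hα
  have haC : ContinuousOn a (Set.Icc 0 ℓ) :=
    fun y hy => (ha y hy).continuousAt.continuousWithinAt
  intro n
  induction n using Nat.strong_induction_on with
  | _ n ih =>
  intro hn1 hn2
  rcases eq_or_lt_of_le hn1 with h1eq | h2le
  · rw [← h1eq] at *; exact h1
  · have hn2' : 2 ≤ n := h2le
    have htn_mem : tmesh T r N n ∈ Set.Icc 0 T :=
      ⟨tmesh_nonneg' hT (by omega), tmesh_le' hT hr (by omega) hn2⟩
    have hpt : 0 < p (tmesh T r N n) := hppos _ htn_mem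
    have hThat : 0 < That α T r N n (n-1) := That_pos' hα0 hα1 hT hr hN hn2'
    have hsch := hscheme n hn2' hn2 (uh n) (hdeg n)
    have hRHS : (∑ m ∈ Finset.Icc 1 M, ∫ y in node ℓ M m..node ℓ M (m + 1),
        (That α T r N n 1 * (uh 1 m).eval y +
            ∑ j ∈ Finset.Icc 2 (n - 1),
              (That α T r N n j - That α T r N n (j - 1)) * (uh j m).eval y) *
          ((uh n) m).eval y) = 0 := by
      apply Finset.sum_eq_zero
      intro m hm
      have hzero : ∀ y : ℝ, (That α T r N n 1 * (uh 1 m).eval y +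
          ∑ j ∈ Finset.Icc 2 (n - 1),
            (That α T r N n j - That α T r N n (j - 1)) * (uh j m).eval y) *
          ((uh n) m).eval y = 0 := by
        intro y
        have hs : (∑ j ∈ Finset.Icc 2 (n - 1),
            (That α T r N n j - That α T r N n (j - 1)) * (uh j m).eval y) = 0 := by
          apply Finset.sum_eq_zero
          intro j hj
          obtain ⟨hj2, hjn⟩ := Finset.mem_Icc.mp hj
          rw [ih j (by omega) (by omega) (by omega) m hm]
          simp
        rw [h1 m hm, hs]
        simp
      calc (∫ y in node ℓ M m..node ℓ M (m + 1),
            (That α T r N n 1 * (uh 1 m).eval y +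
                ∑ j ∈ Finset.Icc 2 (n - 1),
                  (That α T r N n j - That α T r N n (j - 1)) * (uh j m).eval y) *
              ((uh n) m).eval y)
          = ∫ _y in node ℓ M m..node ℓ M (m + 1), (0:ℝ) :=
            intervalIntegral.integral_congr (fun y _ => hzero y)
        _ = 0 := by simp
    rw [hRHS] at hsch
    simp only [nipg] at hsch
    -- hsch : A + B - B + D = 0
    have hS1nonneg : ∀ m ∈ Finset.Icc 1 M, 0 ≤ ∫ y in node ℓ M m..node ℓ M (m + 1),
        (p (tmesh T r N n) * a y *
            (Polynomial.derivative (uh n m)).eval y * (Polynomial.derivative (uh n m)).eval y +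
          (p (tmesh T r N n) * b y + That α T r N n (n - 1)) *
            (uh n m).eval y * (uh n m).eval y) := by
      intro m hm
      obtain ⟨hm1, hmM⟩ := Finset.mem_Icc.mp hm
      have hle : node ℓ M m ≤ node ℓ M (m+1) := (node_lt' hℓ hM m).le
      apply intervalIntegral.integral_nonneg hle
      intro y hy
      have hy' : y ∈ Set.Icc 0 ℓ :=
        ⟨le_trans (node_nonneg' hℓ hM hm1) hy.1,
         le_trans hy.2 (node_le' hℓ hM (by omega))⟩
      have h1a : 0 < a y := hapos y hy'
      have h2b : 0 ≤ b y := hbnn y hy'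
      have hA : 0 ≤ p (tmesh T r N n) * a y *
          ((Polynomial.derivative (uh n m)).eval y * (Polynomial.derivative (uh n m)).eval y) :=
        mul_nonneg (mul_pos hpt h1a).le (mul_self_nonneg _)
      have hB : 0 ≤ (p (tmesh T r N n) * b y + That α T r N n (n - 1)) *
          ((uh n m).eval y * (uh n m).eval y) :=
        mul_nonneg (add_nonneg (mul_nonneg hpt.le h2b) hThat.le) (mul_self_nonneg _)
      nlinarith [hA, hB]
    have hS4nonneg : (0:ℝ) ≤ ∑ m ∈ Finset.Icc 1 (M+1),
        σ m * jump ℓ M (uh n) m * jump ℓ M (uh n) m := by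
      apply Finset.sum_nonneg
      intro m _
      have := mul_nonneg (hσ m) (mul_self_nonneg (jump ℓ M (uh n) m))
      nlinarith [this]
    have hS1zero : (∑ m ∈ Finset.Icc 1 M, ∫ y in node ℓ M m..node ℓ M (m + 1),
        (p (tmesh T r N n) * a y *
            (Polynomial.derivative (uh n m)).eval y * (Polynomial.derivative (uh n m)).eval y +
          (p (tmesh T r N n) * b y + That α T r N n (n - 1)) *
            (uh n m).eval y * (uh n m).eval y)) = 0 := by
      have hs1 := Finset.sum_nonneg hS1nonneg
      linarith [hsch]
    have hper := (Finset.sum_eq_zero_iff_of_nonneg hS1nonneg).mp hS1zero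
    intro m hm
    obtain ⟨hm1, hmM⟩ := Finset.mem_Icc.mp hm
    have hlt : node ℓ M m < node ℓ M (m+1) := node_lt' hℓ hM m
    have hle : node ℓ M m ≤ node ℓ M (m+1) := hlt.le
    have hsub' : Set.Icc (node ℓ M m) (node ℓ M (m+1)) ⊆ Set.Icc 0 ℓ :=
      Set.Icc_subset_Icc (node_nonneg' hℓ hM hm1) (node_le' hℓ hM (by omega))
    have hIm := hper m hm
    -- lower bound by That * ∫ u²
    have hint1 : IntervalIntegrable
        (fun y => That α T r N n (n-1) * ((uh n m).eval y)^2) volume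
        (node ℓ M m) (node ℓ M (m+1)) :=
      (continuous_const.mul ((Polynomial.continuous _).pow 2)).intervalIntegrable _ _
    have hint2 : IntervalIntegrable (fun y =>
        p (tmesh T r N n) * a y *
            (Polynomial.derivative (uh n m)).eval y * (Polynomial.derivative (uh n m)).eval y +
          (p (tmesh T r N n) * b y + That α T r N n (n - 1)) *
            (uh n m).eval y * (uh n m).eval y) volume (node ℓ M m) (node ℓ M (m+1)) := by
      apply ContinuousOn.intervalIntegrable
      rw [Set.uIcc_of_le hle]
      apply ContinuousOn.add
      · exact ((continuousOn_const.mul (haC.mono hsub')).mul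
          ((Polynomial.continuous _).continuousOn)).mul ((Polynomial.continuous _).continuousOn)
      · exact (((continuousOn_const.mul (hb.mono hsub')).add continuousOn_const).mul
          ((Polynomial.continuous _).continuousOn)).mul ((Polynomial.continuous _).continuousOn)
    have hmono : (∫ y in node ℓ M m..node ℓ M (m+1),
        That α T r N n (n-1) * ((uh n m).eval y)^2) ≤ 0 := by
      rw [← hIm]
      apply intervalIntegral.integral_mono_on hle hint1 hint2
      intro y hy
      have hy' := hsub' hy
      have h1a : 0 < a y := hapos y hy'
      have h2b : 0 ≤ b y := hbnn y hy'
      have hA : 0 ≤ p (tmesh T r N n) * a y *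
          ((Polynomial.derivative (uh n m)).eval y * (Polynomial.derivative (uh n m)).eval y) :=
        mul_nonneg (mul_pos hpt h1a).le (mul_self_nonneg _)
      have hB : 0 ≤ (p (tmesh T r N n) * b y) * ((uh n m).eval y * (uh n m).eval y) :=
        mul_nonneg (mul_nonneg hpt.le h2b) (mul_self_nonneg _)
      nlinarith [hA, hB]
    rw [intervalIntegral.integral_const_mul] at hmono
    have hsqnn : (0:ℝ) ≤ ∫ y in node ℓ M m..node ℓ M (m+1), ((uh n m).eval y)^2 :=
      intervalIntegral.integral_nonneg hle (fun y _ => sq_nonneg _)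
    have hsq0 : (∫ y in node ℓ M m..node ℓ M (m+1), ((uh n m).eval y)^2) = 0 := by
      nlinarith [hmono, hsqnn, hThat]
    exact poly_zero_of_sq_integral (uh n m) hlt hsq0
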